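/- Under the stated hypotheses, the gradient of the KL divergence with respect to the variational parameter ignores the dependence of the density ratio on the parameter: the derivative at θ₀ of θ ↦ ∫ q(θ, z) log(q(θ, z)/p(z)) dμ(z) equals the derivative at θ₀ of θ ↦ ∫ q(θ, z) log(q(θ₀, z)/p(z)) dμ(z), and both equal ∫ ∂_θ q(θ₀, z) log(q(θ₀, z)/p(z)) dμ(z). (Appendix C: ∇_φ KL(q_φ‖p) = −∇_φ E_{q_φ} log(p/q), with the ratio held fixed at the current parameter.) -/

import Mathlib

open MeasureTheory

open MeasureTheory Metric Filter Set Topology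
open scoped Classical

lemma stmt11_core {Z : Type*} [MeasurableSpace Z] (μ : Measure Z) [SigmaFinite μ]
    (F F' : ℝ → Z → ℝ) (θ₀ ε : ℝ) (hε : 0 < ε)
    (hFmeas : ∀ θ, Measurable (F θ))
    (hderiv : ∀ᵐ z ∂μ, ∀ θ ∈ Metric.ball θ₀ ε, HasDerivAt (fun t => F t z) (F' θ z) θ)
    (g : Z → ℝ) (hg : Integrable g μ)
    (hbound : ∀ θ ∈ Metric.ball θ₀ ε, ∀ᵐ z ∂μ, |F' θ z| ≤ g z)
    (hFint : Integrable (F θ₀) μ) :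
    Integrable (F' θ₀) μ ∧
      HasDerivAt (fun θ => ∫ z, F θ z ∂μ) (∫ z, F' θ₀ z ∂μ) θ₀ := by
  set δ := ε / 2 with hδdef
  have hδ : 0 < δ := by positivity
  have hδε : δ < ε := by simp [hδdef]; linarith
  have hballs : Metric.ball θ₀ δ ⊆ Metric.ball θ₀ ε := Metric.ball_subset_ball hδε.le
  set J : Set ℝ := Set.Icc (θ₀ - δ) (θ₀ + δ) with hJdef
  have hJball : J ⊆ Metric.ball θ₀ ε := by
    intro x hx
    rw [Metric.mem_ball, Real.dist_eq, abs_sub_lt_iff]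
    obtain ⟨h1, h2⟩ := hx
    constructor <;> linarith
  set c : ℝ → ℝ := fun t => max (θ₀ - δ) (min t (θ₀ + δ)) with hcdef
  have hc_cont : Continuous c := continuous_const.max (continuous_id.min continuous_const)
  have hcJ : ∀ t, c t ∈ J := by
    intro t
    refine ⟨le_max_left _ _, max_le (by linarith) (min_le_right _ _)⟩
  have hc_id : ∀ t ∈ J, c t = t := by
    intro t ht
    rw [hcdef]
    simp only [min_eq_left ht.2, max_eq_right ht.1]
  -- null set of bad z
  set N : Set Z :=
    toMeasurable μ {z | ¬ ∀ θ ∈ Metric.ball θ₀ ε, HasDerivAt (fun t => F t z) (F' θ z) θ}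
      with hNdef
  have hN : MeasurableSet N := measurableSet_toMeasurable _ _
  have hNnull : μ N = 0 := by
    rw [hNdef, measure_toMeasurable]
    exact hderiv
  have hNae : ∀ᵐ z ∂μ, z ∉ N := measure_eq_zero_iff_ae_notMem.1 hNnull
  have hsub : ∀ z ∉ N, ∀ θ ∈ Metric.ball θ₀ ε, HasDerivAt (fun t => F t z) (F' θ z) θ := by
    intro z hz
    by_contra h
    exact hz (subset_toMeasurable _ _ h)
  -- modified, jointly measurable version of F
  set Ft : ℝ → Z → ℝ := fun t z => if z ∈ N then 0 else F (c t) z with hFtdef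
  have hFt_cont : ∀ z, Continuous fun t => Ft t z := by
    intro z
    by_cases hz : z ∈ N
    · simp only [hFtdef, if_pos hz]; exact continuous_const
    · simp only [hFtdef, if_neg hz]
      rw [continuous_iff_continuousAt]
      intro t
      have h1 : ContinuousAt (fun s => F s z) (c t) :=
        (hsub z hz (c t) (hJball (hcJ t))).differentiableAt.continuousAt
      exact h1.comp hc_cont.continuousAt
  have hFt_meas : ∀ t, StronglyMeasurable (Ft t) := fun t =>
    (Measurable.ite hN measurable_const (hFmeas (c t))).stronglyMeasurable
  have hU : StronglyMeasurable (Function.uncurry Ft) :=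
    stronglyMeasurable_uncurry_of_continuous_of_stronglyMeasurable hFt_cont hFt_meas
  -- difference quotients
  set D : ℕ → ℝ × Z → ℝ := fun n pz =>
    ((n : ℝ) + 1) * (Ft (pz.1 + ((n : ℝ) + 1)⁻¹) pz.2 - Ft pz.1 pz.2) with hDdef
  have hD_meas : ∀ n, Measurable (D n) := by
    intro n
    apply Measurable.const_mul
    exact (hU.measurable.comp ((measurable_fst.add_const _).prodMk measurable_snd)).sub
      hU.measurable
  set H : ℝ × Z → ℝ := fun pz => limsup (fun n => D n pz) atTop with hHdef
  have hH_meas : Measurable H := Measurable.limsup hD_meas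
  -- the jointly measurable version agrees with F' for good z, θ in small ball
  have keyH : ∀ z ∉ N, ∀ θ ∈ Metric.ball θ₀ δ, H (θ, z) = F' θ z := by
    intro z hz θ hθ
    have hθJ : θ ∈ J := by
      rw [Metric.mem_ball, Real.dist_eq, abs_sub_lt_iff] at hθ
      exact ⟨by linarith [hθ.2], by linarith [hθ.1]⟩
    have hθlt : θ < θ₀ + δ := by
      rw [Metric.mem_ball, Real.dist_eq, abs_sub_lt_iff] at hθ
      linarith [hθ.1]
    have hderivθ : HasDerivAt (fun t => F t z) (F' θ z) θ := hsub z hz θ (hballs hθ)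
    have hseq : Tendsto (fun n : ℕ => θ + ((n : ℝ) + 1)⁻¹) atTop (𝓝[≠] θ) := by
      apply tendsto_nhdsWithin_of_tendsto_nhds_of_eventually_within
      · have h0 : Tendsto (fun n : ℕ => ((n : ℝ) + 1)⁻¹) atTop (𝓝 0) := by
          simpa only [one_div] using tendsto_one_div_add_atTop_nhds_zero_nat (𝕜 := ℝ)
        simpa using tendsto_const_nhds.add h0
      · filter_upwards with n
        have : (0 : ℝ) < ((n : ℝ) + 1)⁻¹ := by positivity
        simp only [Set.mem_compl_iff, Set.mem_singleton_iff]
        intro h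
        nlinarith [this]
    have htend : Tendsto (fun n : ℕ => slope (fun t => F t z) θ (θ + ((n : ℝ) + 1)⁻¹))
        atTop (𝓝 (F' θ z)) :=
      (hasDerivAt_iff_tendsto_slope.1 hderivθ).comp hseq
    obtain ⟨n₀, hn₀⟩ := exists_nat_one_div_lt (show (0:ℝ) < θ₀ + δ - θ by linarith)
    have hev : ∀ᶠ n in atTop, D n (θ, z)
        = slope (fun t => F t z) θ (θ + ((n : ℝ) + 1)⁻¹) := by
      filter_upwards [eventually_ge_atTop n₀] with n hn
      have hinv_pos : (0 : ℝ) < ((n : ℝ) + 1)⁻¹ := by positivity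
      have hmono : ((n : ℝ) + 1)⁻¹ ≤ ((n₀ : ℝ) + 1)⁻¹ := by
        apply inv_anti₀ (by positivity)
        exact_mod_cast by exact_mod_cast Nat.add_le_add_right hn 1
      have hx : θ + ((n : ℝ) + 1)⁻¹ ∈ J := by
        constructor
        · have := hθJ.1; linarith
        · have : ((n₀ : ℝ) + 1)⁻¹ < θ₀ + δ - θ := by
            rw [one_div] at hn₀; exact hn₀
          linarith [hmono]
      have e1 : Ft (θ + ((n : ℝ) + 1)⁻¹) z = F (θ + ((n : ℝ) + 1)⁻¹) z := by
        simp only [hFtdef, if_neg hz, hc_id _ hx]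
      have e2 : Ft θ z = F θ z := by
        simp only [hFtdef, if_neg hz, hc_id _ hθJ]
      rw [hDdef]
      simp only [e1, e2]
      rw [slope_def_field]
      rw [add_sub_cancel_left]
      rw [div_eq_inv_mul, inv_inv]
    calc H (θ, z) = limsup (fun n : ℕ => slope (fun t => F t z) θ (θ + ((n : ℝ) + 1)⁻¹)) atTop :=
          limsup_congr hev
      _ = F' θ z := htend.limsup_eq
  -- measurable version of g
  set G : Z → ℝ := hg.1.aemeasurable.mk g with hGdef
  have hG_meas : Measurable G := hg.1.aemeasurable.measurable_mk
  have hgG : g =ᵐ[μ] G := hg.1.aemeasurable.ae_eq_mk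
  -- Fubini swap of the bound
  set ν : Measure ℝ := volume.restrict (Metric.ball θ₀ δ) with hνdef
  set A : Set (Z × ℝ) := {pz | G pz.1 < |H (pz.2, pz.1)|} with hAdef
  have hA : MeasurableSet A := by
    apply measurableSet_lt (hG_meas.comp measurable_fst)
    exact (hH_meas.comp (measurable_snd.prodMk measurable_fst)).abs
  have hslice : ∀ θ ∈ Metric.ball θ₀ δ, μ {z | (z, θ) ∈ A} = 0 := by
    intro θ hθ
    have h1 : ∀ᵐ z ∂μ, (z, θ) ∉ A := by
      filter_upwards [hbound θ (hballs hθ), hNae, hgG] with z h2 h3 h4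
      simp only [hAdef, Set.mem_setOf_eq, not_lt, keyH z h3 θ hθ, ← h4]
      exact h2
    have h2 := ae_iff.1 h1
    simpa only [not_not] using h2
  have hprod : (μ.prod ν) A = 0 := by
    rw [Measure.prod_apply_symm hA]
    have h0 : (fun θ => μ ((fun z => (z, θ)) ⁻¹' A)) =ᵐ[ν] 0 := by
      rw [hνdef]
      rw [Filter.EventuallyEq, ae_restrict_iff' measurableSet_ball]
      filter_upwards with θ hθ
      exact hslice θ hθ
    rw [lintegral_congr_ae h0]
    simp
  have hswap : ∀ᵐ z ∂μ, ν (Prod.mk z ⁻¹' A) = 0 := (Measure.measure_prod_null hA).1 hprod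
  -- Lipschitz property
  have hlip : ∀ᵐ z ∂μ, LipschitzOnWith (Real.nnabs (g z)) (fun t => F t z) (Metric.ball θ₀ δ) := by
    filter_upwards [hswap, hNae, hgG, hderiv] with z hzb hzN hzg hzd
    have hzb' : ∀ᵐ θ ∂ν, |H (θ, z)| ≤ G z := by
      have := measure_eq_zero_iff_ae_notMem.1 hzb
      filter_upwards [this] with θ hθ
      simpa only [hAdef, Set.mem_preimage, Set.mem_setOf_eq, not_lt] using hθ
    have key : ∀ a b, a ∈ Metric.ball θ₀ δ → b ∈ Metric.ball θ₀ δ → a ≤ b →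
        |F b z - F a z| ≤ |g z| * (b - a) := by
      intro a b ha hb hab
      have hIcc : Set.Icc a b ⊆ Metric.ball θ₀ δ :=
        ((convex_ball θ₀ δ).ordConnected).out ha hb
      set f' : ℝ → ℝ := fun θ => H (θ, z) with hf'def
      have hf'_meas : Measurable f' := hH_meas.comp (measurable_id.prodMk measurable_const)
      have hbd : ∀ᵐ θ ∂(volume.restrict (Set.Ioc a b)), ‖f' θ‖ ≤ |g z| := by
        have h2 : ∀ᵐ θ ∂(volume.restrict (Set.Ioc a b)), |H (θ, z)| ≤ G z := by
          apply ae_restrict_of_ae_restrict_of_subset (fun x hx => hIcc ⟨le_of_lt hx.1, hx.2⟩)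
          exact hzb'
        filter_upwards [h2] with θ hθ
        rw [Real.norm_eq_abs]
        calc |H (θ, z)| ≤ G z := hθ
          _ = g z := hzg.symm
          _ ≤ |g z| := le_abs_self _
      have hint : IntervalIntegrable f' volume a b := by
        rw [intervalIntegrable_iff_integrableOn_Ioc_of_le hab]
        apply Integrable.mono' (integrableOn_const measure_Ioc_lt_top.ne)
          hf'_meas.aestronglyMeasurable hbd
      have hFTC : ∫ θ in a..b, f' θ = F b z - F a z := by
        apply intervalIntegral.integral_eq_sub_of_hasDerivAt
        · intro θ hθ
          rw [Set.uIcc_of_le hab] at hθ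
          have hθball : θ ∈ Metric.ball θ₀ δ := hIcc hθ
          rw [hf'def]
          simp only []
          rw [keyH z hzN θ hθball]
          exact hzd θ (hballs hθball)
        · exact hint
      rw [← hFTC, intervalIntegral.integral_of_le hab]
      have h3 : ‖∫ θ in Set.Ioc a b, f' θ‖ ≤ ∫ _θ in Set.Ioc a b, |g z| := by
        apply norm_integral_le_of_norm_le (integrableOn_const measure_Ioc_lt_top.ne) hbd
      rw [Real.norm_eq_abs] at h3
      calc |∫ θ in Set.Ioc a b, f' θ| ≤ ∫ _θ in Set.Ioc a b, |g z| := h3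
        _ = (volume (Set.Ioc a b)).toReal * |g z| := by
            rw [setIntegral_const, smul_eq_mul]; rfl
        _ = (b - a) * |g z| := by
            rw [Real.volume_Ioc, ENNReal.toReal_ofReal (by linarith)]
        _ = |g z| * (b - a) := by ring
    rw [lipschitzOnWith_iff_dist_le_mul]
    intro x hx y hy
    rcases le_total x y with h | h
    · rw [Real.dist_eq, Real.dist_eq, abs_sub_comm (F x z), abs_sub_comm x]
      calc |F y z - F x z| ≤ |g z| * (y - x) := key x y hx hy h
        _ ≤ ↑(Real.nnabs (g z)) * |y - x| := by
            rw [Real.coe_nnabs]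
            exact mul_le_mul_of_nonneg_left (le_abs_self _) (abs_nonneg _)
    · rw [Real.dist_eq, Real.dist_eq]
      calc |F x z - F y z| ≤ |g z| * (x - y) := key y x hy hx h
        _ ≤ ↑(Real.nnabs (g z)) * |x - y| := by
            rw [Real.coe_nnabs]
            exact mul_le_mul_of_nonneg_left (le_abs_self _) (abs_nonneg _)
  have hmeas_ev : ∀ᶠ θ in 𝓝 θ₀, AEStronglyMeasurable (F θ) μ :=
    Filter.Eventually.of_forall fun θ => (hFmeas θ).aestronglyMeasurable
  have hF'meas : AEStronglyMeasurable (F' θ₀) μ := by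
    have h1 : (fun z => H (θ₀, z)) =ᵐ[μ] F' θ₀ := by
      filter_upwards [hNae] with z hz
      exact keyH z hz θ₀ (mem_ball_self hδ)
    exact ((hH_meas.comp (measurable_const.prodMk measurable_id)).aestronglyMeasurable).congr h1
  exact hasDerivAt_integral_of_dominated_loc_of_lip (ball_mem_nhds θ₀ hδ) hmeas_ev hFint hF'meas hlip hg
    (hderiv.mono fun z h => h θ₀ (mem_ball_self hε))


/-- **Appendix C.** Under the stated hypotheses, the gradient of
the KL divergence w.r.t. the variational parameter ignores the dependence of the
density ratio on the parameter: the derivative at `θ₀` of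
`θ ↦ ∫ q(θ,z) log(q(θ,z)/p(z)) dμ` equals the derivative at `θ₀` of
`θ ↦ ∫ q(θ,z) log(q(θ₀,z)/p(z)) dμ`, and both equal
`∫ ∂_θ q(θ₀,z) log(q(θ₀,z)/p(z)) dμ`. -/
theorem stmt_11
    {Z : Type*} [MeasurableSpace Z] (μ : Measure Z)
    (p : Z → ℝ) (hp_meas : Measurable p) (hp_pos : ∀ z, 0 < p z)
    (q q' : ℝ → Z → ℝ)
    (hq_meas : ∀ θ, Measurable (q θ))
    (hq_pos : ∀ θ z, 0 < q θ z)
    (hq_int : ∀ θ, Integrable (q θ) μ)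
    (hq_norm : ∀ θ, ∫ z, q θ z ∂μ = 1)
    (θ₀ : ℝ) (ε : ℝ) (hε : 0 < ε)
    (hderiv : ∀ᵐ z ∂μ, ∀ θ ∈ Metric.ball θ₀ ε,
      HasDerivAt (fun t => q t z) (q' θ z) θ)
    (g₀ g₁ g₂ : Z → ℝ)
    (hg₀ : Integrable g₀ μ) (hg₁ : Integrable g₁ μ) (hg₂ : Integrable g₂ μ)
    (hbound₀ : ∀ θ ∈ Metric.ball θ₀ ε, ∀ᵐ z ∂μ, |q' θ z| ≤ g₀ z)
    (hbound₁ : ∀ θ ∈ Metric.ball θ₀ ε, ∀ᵐ z ∂μ,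
      |q' θ z * Real.log (q θ z / p z) + q' θ z| ≤ g₁ z)
    (hbound₂ : ∀ θ ∈ Metric.ball θ₀ ε, ∀ᵐ z ∂μ,
      |q' θ z * Real.log (q θ₀ z / p z)| ≤ g₂ z)
    (hint₁ : ∀ θ ∈ Metric.ball θ₀ ε,
      Integrable (fun z => q θ z * Real.log (q θ z / p z)) μ)
    (hint₂ : ∀ θ ∈ Metric.ball θ₀ ε,
      Integrable (fun z => q θ z * Real.log (q θ₀ z / p z)) μ) :
    HasDerivAt (fun θ => ∫ z, q θ z * Real.log (q θ z / p z) ∂μ)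
        (∫ z, q' θ₀ z * Real.log (q θ₀ z / p z) ∂μ) θ₀ ∧
    HasDerivAt (fun θ => ∫ z, q θ z * Real.log (q θ₀ z / p z) ∂μ)
        (∫ z, q' θ₀ z * Real.log (q θ₀ z / p z) ∂μ) θ₀ := by
  haveI : SigmaFinite μ := by
    apply MeasureTheory.Measure.sigmaFinite_of_countable
      (Set.countable_range fun n : ℕ => {z | 1 / ((n : ℝ) + 1) ≤ q θ₀ z})
    · rintro s ⟨n, rfl⟩
      exact (hq_int θ₀).measure_ge_lt_top (by positivity)
    · rw [Set.sUnion_range]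
      ext z
      simp only [Set.mem_iUnion, Set.mem_setOf_eq, Set.mem_univ, iff_true]
      obtain ⟨n, hn⟩ := exists_nat_one_div_lt (hq_pos θ₀ z)
      exact ⟨n, hn.le⟩
  have hball₀ : θ₀ ∈ Metric.ball θ₀ ε := mem_ball_self hε
  -- derivative of the normalization
  have res0 := stmt11_core μ q q' θ₀ ε hε hq_meas hderiv g₀ hg₀ hbound₀ (hq_int θ₀)
  have hzero : ∫ z, q' θ₀ z ∂μ = 0 := by
    have h1 : (fun θ => ∫ z, q θ z ∂μ) = fun _ => (1 : ℝ) := funext hq_norm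
    have h2 := res0.2
    rw [h1] at h2
    exact h2.unique (hasDerivAt_const θ₀ 1)
  -- first function
  have hderiv₁ : ∀ᵐ z ∂μ, ∀ θ ∈ Metric.ball θ₀ ε,
      HasDerivAt (fun t => q t z * Real.log (q t z / p z))
        (q' θ z * Real.log (q θ z / p z) + q' θ z) θ := by
    filter_upwards [hderiv] with z hz θ hθ
    have h := hz θ hθ
    have heq : (fun t => q t z * Real.log (q t z / p z))
        = fun t => q t z * (Real.log (q t z) - Real.log (p z)) := by
      funext t; rw [Real.log_div (hq_pos t z).ne' (hp_pos z).ne']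
    rw [heq]
    have h2 := h.mul ((h.log (hq_pos θ z).ne').sub_const (Real.log (p z)))
    refine h2.congr_deriv ?_
    rw [Real.log_div (hq_pos θ z).ne' (hp_pos z).ne', ← mul_div_assoc, mul_div_cancel_left₀ _ (hq_pos θ z).ne']
  have res1 := stmt11_core μ (fun θ z => q θ z * Real.log (q θ z / p z))
    (fun θ z => q' θ z * Real.log (q θ z / p z) + q' θ z) θ₀ ε hε
    (fun θ => (hq_meas θ).mul (((hq_meas θ).div hp_meas).log))
    hderiv₁ g₁ hg₁ hbound₁ (hint₁ θ₀ hball₀)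
  -- second function
  have hderiv₂ : ∀ᵐ z ∂μ, ∀ θ ∈ Metric.ball θ₀ ε,
      HasDerivAt (fun t => q t z * Real.log (q θ₀ z / p z))
        (q' θ z * Real.log (q θ₀ z / p z)) θ := by
    filter_upwards [hderiv] with z hz θ hθ
    exact (hz θ hθ).mul_const _
  have res2 := stmt11_core μ (fun θ z => q θ z * Real.log (q θ₀ z / p z))
    (fun θ z => q' θ z * Real.log (q θ₀ z / p z)) θ₀ ε hε
    (fun θ => (hq_meas θ).mul (((hq_meas θ₀).div hp_meas).log))
    hderiv₂ g₂ hg₂ hbound₂ (hint₂ θ₀ hball₀)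
  have hkey : ∫ z, (q' θ₀ z * Real.log (q θ₀ z / p z) + q' θ₀ z) ∂μ
      = ∫ z, q' θ₀ z * Real.log (q θ₀ z / p z) ∂μ := by
    rw [integral_add res2.1 res0.1, hzero, add_zero]
  refine ⟨?_, res2.2⟩
  rw [← hkey]
  exact res1.2
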